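/- Consider the labelled Markov chain with state set X = {x, x₁, y}, labels L = {a, b}, labelling l(x) = l(y) = a, l(x₁) = b, and transitions τ(x) = ½·|x₁⟩ + ½·|x⟩, τ(x₁) = 1·|x₁⟩, τ(y) = 1·|y⟩. Then bd(x,y) = 1, while Γ^i(⊥)(x,y) = 1 − 2^{−(i−1)} for every i ≥ 1; in particular Γ^i(⊥)(x,y) < 1 for every natural number i, so the behavioural distance of x and y is reached only in the limit and not by any finite approximant. -/

import Mathlib

/-- A finitely supported, rational-valued probability distribution on `X`. -/
structure FinDist (X : Type*) where
  p : X → ℝ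
  nonneg : ∀ x, 0 ≤ p x
  rat : ∀ x, ∃ q : ℚ, (q : ℝ) = p x
  supp : Finset X
  mem_supp : ∀ x, x ∈ supp ↔ p x ≠ 0
  sum_one : ∑ x ∈ supp, p x = 1

/-- A labelled Markov chain with states `X` and labels `L`. -/
structure LMC (X : Type*) (L : Type*) where
  τ : X → FinDist X
  label : X → L

/-- Expectation `μ ⊨ h = ∑ x, μ(x)·h(x)`. -/
noncomputable def expv {X : Type*} (μ : FinDist X) (h : X → ℝ) : ℝ :=
  ∑ z ∈ μ.supp, μ.p z * h z

/-- A `[0,1]`-valued pseudometric on `X`. -/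
structure PMet (X : Type*) where
  d : X → X → ℝ
  nonneg : ∀ x y, 0 ≤ d x y
  le_one : ∀ x y, d x y ≤ 1
  refl : ∀ x, d x x = 0
  symm : ∀ x y, d x y = d y x
  triangle : ∀ x y z, d x z ≤ d x y + d y z

open Classical in
/-- The functional `Γ` (on underlying distance functions). -/
noncomputable def GammaFun {X L : Type*} (M : LMC X L) (d : X → X → ℝ) : X → X → ℝ :=
  fun x y =>
    if M.label x ≠ M.label y then 1
    else sSup { r : ℝ | ∃ h : X → ℝ, (∀ z, h z ∈ Set.Icc (0:ℝ) 1) ∧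
      (∀ u v, |h u - h v| ≤ d u v) ∧ r = expv (M.τ x) h - expv (M.τ y) h }

/-- Point mass distribution. -/
noncomputable def pointMass {X : Type*} [DecidableEq X] (a : X) : FinDist X where
  p := fun z => if z = a then 1 else 0
  nonneg := fun z => by (try dsimp only); split <;> norm_num
  rat := fun z => by
    (try dsimp only); split
    · exact ⟨1, by norm_num⟩
    · exact ⟨0, by norm_num⟩
  supp := {a}
  mem_supp := fun z => by simp
  sum_one := by simp

/-- Fair coin distribution over two distinct states. -/
noncomputable def halfHalf {X : Type*} [DecidableEq X] (a b : X) (hab : a ≠ b) : FinDist X where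
  p := fun z => if z = a ∨ z = b then 1/2 else 0
  nonneg := fun z => by (try dsimp only); split <;> norm_num
  rat := fun z => by
    (try dsimp only); split
    · exact ⟨1/2, by norm_num⟩
    · exact ⟨0, by norm_num⟩
  supp := {a, b}
  mem_supp := fun z => by
    simp only [Finset.mem_insert, Finset.mem_singleton]
    split <;> simp_all
  sum_one := by
    rw [Finset.sum_pair hab]
    norm_num


/-- The LMC of Example `noform`: `x = 0`, `x₁ = 1`, `y = 2`;
`l(x) = l(y) = false`, `l(x₁) = true`;
`τ(x) = ½|x₁⟩ + ½|x⟩`, `τ(x₁) = |x₁⟩`, `τ(y) = |y⟩`. -/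
noncomputable def M15 : LMC (Fin 3) Bool where
  τ := fun i => if i = 0 then halfHalf 1 0 (by decide) else pointMass i
  label := fun i => decide (i = 1)

lemma expv_pointMass (a : Fin 3) (h : Fin 3 → ℝ) : expv (pointMass a) h = h a := by
  simp [expv, pointMass]

lemma tau0 : M15.τ 0 = halfHalf 1 0 (by decide) := rfl
lemma tau1 : M15.τ 1 = pointMass 1 := rfl
lemma tau2 : M15.τ 2 = pointMass 2 := rfl

lemma expv_tau0 (h : Fin 3 → ℝ) : expv (M15.τ 0) h = 1/2 * h 1 + 1/2 * h 0 := by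
  rw [tau0]
  simp [expv, halfHalf, Finset.sum_pair (show (1:Fin 3) ≠ 0 by decide)]

lemma label02 : M15.label 0 = M15.label 2 := rfl
lemma label01 : M15.label 0 ≠ M15.label 1 := by decide
lemma label12 : M15.label 1 ≠ M15.label 2 := by decide

/-- The distance table: `a` at `(0,2)` and `(2,0)`, `1` at label-mismatch pairs, `0` on diagonal. -/
noncomputable def Tab (a : ℝ) : Fin 3 → Fin 3 → ℝ := ![![0,1,a],![1,0,1],![a,1,0]]

lemma Gamma_ne (d : Fin 3 → Fin 3 → ℝ) (x y : Fin 3) (hxy : M15.label x ≠ M15.label y) :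
    GammaFun M15 d x y = 1 := by
  rw [GammaFun, if_pos hxy]

lemma Gamma_eq (d : Fin 3 → Fin 3 → ℝ) (x y : Fin 3) (hxy : M15.label x = M15.label y) :
    GammaFun M15 d x y = sSup { r : ℝ | ∃ h : Fin 3 → ℝ, (∀ z, h z ∈ Set.Icc (0:ℝ) 1) ∧
      (∀ u v, |h u - h v| ≤ d u v) ∧ r = expv (M15.τ x) h - expv (M15.τ y) h } := by
  rw [GammaFun, if_neg (by simpa using hxy)]

lemma sSup_diag (d : Fin 3 → Fin 3 → ℝ) (hd : ∀ u v, 0 ≤ d u v) (x : Fin 3) :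
    GammaFun M15 d x x = 0 := by
  rw [Gamma_eq d x x rfl]
  apply IsGreatest.csSup_eq
  constructor
  · exact ⟨fun _ => 0, fun z => Set.mem_Icc.2 ⟨le_refl 0, zero_le_one⟩,
      fun u v => by simpa using hd u v, by ring⟩
  · rintro r ⟨h, _, _, rfl⟩; simp

lemma Gamma_Tab (a : ℝ) (ha0 : 0 ≤ a) (ha1 : a ≤ 1) :
    GammaFun M15 (Tab a) = Tab (1/2 + a/2) := by
  have hnn : ∀ u v, 0 ≤ Tab a u v := by
    intro u v; fin_cases u <;> fin_cases v <;> simp [Tab] <;> linarith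
  funext u v
  fin_cases u <;> fin_cases v <;>
    [skip; show GammaFun M15 (Tab a) 0 1 = Tab (1/2+a/2) 0 1;
     show GammaFun M15 (Tab a) 0 2 = Tab (1/2+a/2) 0 2;
     show GammaFun M15 (Tab a) 1 0 = Tab (1/2+a/2) 1 0; skip;
     show GammaFun M15 (Tab a) 1 2 = Tab (1/2+a/2) 1 2;
     show GammaFun M15 (Tab a) 2 0 = Tab (1/2+a/2) 2 0;
     show GammaFun M15 (Tab a) 2 1 = Tab (1/2+a/2) 2 1; skip]
  · rw [sSup_diag _ hnn]; simp [Tab]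
  · rw [Gamma_ne _ _ _ label01]; simp [Tab]
  · -- (0,2)
    rw [Gamma_eq _ _ _ label02]
    have : Tab (1/2 + a/2) 0 2 = 1/2 + a/2 := by simp [Tab]
    rw [this]
    apply IsGreatest.csSup_eq
    constructor
    · refine ⟨![a, 1, 0], ?_, ?_, ?_⟩
      · intro z; fin_cases z <;> simp <;> constructor <;> linarith
      · intro u v; fin_cases u <;> fin_cases v <;>
          simp [Tab, abs_le] <;> first | (constructor <;> linarith) | linarith
      · rw [expv_tau0, tau2, expv_pointMass]; simp; ring
    · rintro r ⟨h, hIcc, hLip, rfl⟩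
      rw [expv_tau0, tau2, expv_pointMass]
      have h1 := (hIcc 1).2
      have h2n := (hIcc 2).1
      have h02 : h 0 - h 2 ≤ a := by
        have := hLip 0 2
        simp [Tab, abs_le] at this
        linarith [this.2]
      linarith
  · rw [Gamma_ne _ _ _ label01.symm]; simp [Tab]
  · rw [sSup_diag _ hnn]; simp [Tab]
  · rw [Gamma_ne _ _ _ label12]; simp [Tab]
  · -- (2,0)
    rw [Gamma_eq _ _ _ label02.symm]
    have : Tab (1/2 + a/2) 2 0 = 1/2 + a/2 := by simp [Tab]
    rw [this]
    apply IsGreatest.csSup_eq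
    constructor
    · refine ⟨![1-a, 0, 1], ?_, ?_, ?_⟩
      · intro z; fin_cases z <;> simp <;> constructor <;> linarith
      · intro u v; fin_cases u <;> fin_cases v <;>
          simp [Tab, abs_le] <;> first | (constructor <;> linarith) | linarith
      · rw [expv_tau0, tau2, expv_pointMass]; simp; ring
    · rintro r ⟨h, hIcc, hLip, rfl⟩
      rw [expv_tau0, tau2, expv_pointMass]
      have h2 := (hIcc 2).2
      have h10 := (hIcc 1).1
      have h20 : h 2 - h 0 ≤ a := by
        have := hLip 2 0
        simp [Tab, abs_le] at this
        linarith [this.2]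
      linarith
  · rw [Gamma_ne _ _ _ label12.symm]; simp [Tab]
  · rw [sSup_diag _ hnn]; simp [Tab]

lemma Gamma_bot : GammaFun M15 (fun _ _ => 0) = Tab 0 := by
  have hsup : ∀ x y : Fin 3, M15.label x = M15.label y →
      GammaFun M15 (fun _ _ => 0) x y = 0 := by
    intro x y hxy
    rw [Gamma_eq _ _ _ hxy]
    apply IsGreatest.csSup_eq
    constructor
    · exact ⟨fun _ => 0, fun z => Set.mem_Icc.2 ⟨le_refl 0, zero_le_one⟩,
        fun u v => by simp, by simp [expv]⟩
    · rintro r ⟨h, hIcc, hLip, rfl⟩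
      have hc : ∀ u v : Fin 3, h u = h v := by
        intro u v
        have := hLip u v
        rw [abs_nonpos_iff] at this <;> linarith [sub_eq_zero.1 this]
      have e0 := expv_tau0 h
      have e1 : h 0 = h 1 := hc 0 1
      have e2 : h 0 = h 2 := hc 0 2
      fin_cases x <;> fin_cases y <;>
        simp_all [tau1, tau2, expv_pointMass] <;> linarith
  funext u v
  fin_cases u <;> fin_cases v <;>
    first
      | (rw [Gamma_ne _ _ _ (by decide)]; simp [Tab])
      | (rw [hsup _ _ (by decide)]; simp [Tab])

lemma iterate_Tab (i : ℕ) (hi : 1 ≤ i) :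
    (GammaFun M15)^[i] (fun _ _ => 0) = Tab (1 - (1/2 : ℝ) ^ (i - 1)) := by
  induction i, hi using Nat.le_induction with
  | base => simpa using Gamma_bot
  | succ i hi ih =>
    rw [Function.iterate_succ_apply', ih]
    have h0 : (0:ℝ) ≤ 1 - (1/2 : ℝ) ^ (i-1) := by
      have : (1/2 : ℝ) ^ (i-1) ≤ 1 := pow_le_one₀ (by norm_num) (by norm_num)
      linarith
    have h1 : (1:ℝ) - (1/2 : ℝ) ^ (i-1) ≤ 1 := by
      have : (0:ℝ) ≤ (1/2 : ℝ) ^ (i-1) := by positivity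
      linarith
    rw [Gamma_Tab _ h0 h1]
    congr 1
    obtain ⟨j, rfl⟩ : ∃ j, i = j + 1 := ⟨i-1, (Nat.succ_pred_eq_of_pos hi).symm⟩
    simp [pow_succ]
    ring

/-- `bd(x,y) = 1` but each finite approximant satisfies
`Γ^i(⊥)(x,y) = 1 − 2^{-(i−1)} < 1`. -/
theorem bd_not_attained (bd : PMet (Fin 3))
    (hfix : ∀ x y, GammaFun M15 bd.d x y = bd.d x y)
    (hleast : ∀ d : PMet (Fin 3), (∀ x y, GammaFun M15 d.d x y = d.d x y) →
      ∀ x y, bd.d x y ≤ d.d x y) :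
    bd.d 0 2 = 1 ∧
    (∀ i : ℕ, 1 ≤ i →
      (GammaFun M15)^[i] (fun _ _ => 0) 0 2 = 1 - (1/2 : ℝ) ^ (i - 1)) ∧
    (∀ i : ℕ, (GammaFun M15)^[i] (fun _ _ => 0) 0 2 < 1) := by
  have part2 : ∀ i : ℕ, 1 ≤ i →
      (GammaFun M15)^[i] (fun _ _ => 0) 0 2 = 1 - (1/2 : ℝ) ^ (i - 1) := by
    intro i hi
    rw [iterate_Tab i hi]
    simp [Tab]
  refine ⟨?_, part2, ?_⟩
  · -- bd.d 0 2 = 1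
    have h12 : bd.d 1 2 = 1 := by rw [← hfix 1 2, Gamma_ne _ _ _ label12]
    have key : 1/2 + 1/2 * bd.d 0 2 ≤ bd.d 0 2 := by
      conv_rhs => rw [← hfix 0 2, Gamma_eq _ _ _ label02]
      apply le_csSup
      · refine ⟨1, ?_⟩
        rintro r ⟨h, hIcc, hLip, rfl⟩
        rw [expv_tau0, tau2, expv_pointMass]
        have := (hIcc 1).2
        have := (hIcc 0).2
        have := (hIcc 2).1
        linarith
      · refine ⟨fun z => bd.d z 2, fun z => Set.mem_Icc.2 ⟨bd.nonneg z 2, bd.le_one z 2⟩,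
          ?_, ?_⟩
        · intro u v
          rw [abs_le]
          constructor
          · have := bd.triangle v u 2
            have := bd.symm u v
            linarith
          · have := bd.triangle u v 2
            linarith
        · rw [expv_tau0, tau2, expv_pointMass, h12, bd.refl 2]
          ring
    have := bd.le_one 0 2
    linarith
  · intro i
    rcases Nat.eq_zero_or_pos i with rfl | hi
    · simp
    · rw [part2 i hi]
      have : (0:ℝ) < (1/2 : ℝ) ^ (i-1) := by positivity
      linarith
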